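/- The beta invariant of the uniform matroid U_{r,n} (rank r on n elements, with 0 < r < n) equals the binomial coefficient C(n-2, r-1). -/

import Mathlib

open Matroid

/-- Deletion of a set of elements from a matroid. -/
def mDelete (M : Matroid ℕ) (D : Set ℕ) : Matroid ℕ := M ↾ (M.E \ D)

/-- Contraction of a set of elements, defined by duality: `M ／ C = (M✶ ＼ C)✶`. -/
def mContract (M : Matroid ℕ) (C : Set ℕ) : Matroid ℕ := (mDelete M✶ C)✶

/-- `e` is a loop of `M`: an element of the ground set whose singleton is dependent. -/
def IsLoopE (M : Matroid ℕ) (e : ℕ) : Prop := e ∈ M.E ∧ ¬ M.Indep {e}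

/-- `e` is a coloop of `M`: an element of the ground set lying in every base. -/
def IsColoopE (M : Matroid ℕ) (e : ℕ) : Prop := e ∈ M.E ∧ ∀ B, M.IsBase B → e ∈ B

/-- `M` is the uniform matroid of rank `r` on ground set `E`. -/
def IsUnif (M : Matroid ℕ) (E : Set ℕ) (r : ℕ) : Prop :=
  M.E = E ∧ ∀ B, M.IsBase B ↔ B ⊆ E ∧ B.encard = (r : ℕ∞)

lemma IsUnif.indep_iff {M : Matroid ℕ} {E : Set ℕ} {r : ℕ} (h : IsUnif M E r)
    (hrE : (r : ℕ∞) ≤ E.encard) {I : Set ℕ} :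
    M.Indep I ↔ I ⊆ E ∧ I.encard ≤ (r : ℕ∞) := by
  constructor
  · intro hI
    obtain ⟨B, hB, hIB⟩ := Matroid.indep_iff.1 hI
    obtain ⟨hBE, hBr⟩ := (h.2 B).1 hB
    exact ⟨hIB.trans hBE, hBr ▸ Set.encard_mono hIB⟩
  · rintro ⟨hIE, hIr⟩
    obtain ⟨B, hIB, hBE, hBr⟩ := Set.exists_superset_subset_encard_eq hIE hIr hrE
    exact Matroid.indep_iff.2 ⟨B, (h.2 B).2 ⟨hBE, hBr⟩, hIB⟩

lemma IsUnif.restrict {M : Matroid ℕ} {E : Set ℕ} {r : ℕ} (h : IsUnif M E r)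
    {X : Set ℕ} (hXE : X ⊆ E) (hrX : (r : ℕ∞) ≤ X.encard) :
    IsUnif (M ↾ X) X r := by
  have hXE' : X ⊆ M.E := by rw [h.1]; exact hXE
  have hrE : (r : ℕ∞) ≤ E.encard := hrX.trans (Set.encard_mono hXE)
  refine ⟨rfl, fun B => ?_⟩
  rw [Matroid.isBase_restrict_iff hXE']
  constructor
  · intro hB
    obtain ⟨hBE, hBr⟩ := (h.indep_iff hrE).1 hB.indep
    refine ⟨hB.subset, ?_⟩
    obtain ⟨J, hBJ, hJX, hJr⟩ := Set.exists_superset_subset_encard_eq hB.subset hBr hrX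
    have hJi : M.Indep J := (h.indep_iff hrE).2 ⟨hJX.trans hXE, hJr.le⟩
    rw [hB.eq_of_subset_indep hJi hBJ hJX, hJr]
  · rintro ⟨hBX, hBr⟩
    have hBi : M.Indep B := (h.indep_iff hrE).2 ⟨hBX.trans hXE, hBr.le⟩
    have hBfin : B.Finite := Set.finite_of_encard_eq_coe hBr
    rw [Matroid.isBasis_iff hXE']
    refine ⟨hBi, hBX, fun J hJ hBJ hJX => ?_⟩
    exact hBfin.eq_of_subset_of_encard_le hBJ
      (by rw [hBr]; exact ((h.indep_iff hrE).1 hJ).2)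

lemma IsUnif.dual {M : Matroid ℕ} {E : Set ℕ} {r n : ℕ} (h : IsUnif M E r)
    (hE : E.encard = (n : ℕ∞)) (hrn : r ≤ n) :
    IsUnif M✶ E (n - r) := by
  have hEfin : E.Finite := Set.finite_of_encard_eq_coe hE
  refine ⟨h.1, fun B => ?_⟩
  rw [Matroid.dual_isBase_iff', h.1, h.2]
  constructor
  · rintro ⟨⟨-, hdr⟩, hBE⟩
    refine ⟨hBE, ?_⟩
    obtain ⟨k, hk⟩ := (hEfin.subset hBE).exists_encard_eq_coe
    have hadd := Set.encard_diff_add_encard_of_subset hBE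
    rw [hdr, hE, hk, ← Nat.cast_add, Nat.cast_inj] at hadd
    rw [hk, Nat.cast_inj]
    omega
  · rintro ⟨hBE, hBr⟩
    refine ⟨⟨Set.diff_subset, ?_⟩, hBE⟩
    obtain ⟨k, hk⟩ := (hEfin.diff : (E \ B).Finite).exists_encard_eq_coe
    have hadd := Set.encard_diff_add_encard_of_subset hBE
    rw [hBr, hE, hk, ← Nat.cast_add, Nat.cast_inj] at hadd
    rw [hk, Nat.cast_inj]
    omega

lemma IsUnif.eq_loopyOn {M : Matroid ℕ} {E : Set ℕ} (h : IsUnif M E 0) :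
    M = Matroid.loopyOn E := by
  rw [Matroid.eq_loopyOn_iff]
  refine ⟨h.1, fun X hX hXi => ?_⟩
  have := (h.indep_iff (by simp)).1 hXi
  simpa [Set.encard_eq_zero] using this.2

lemma IsUnif.loop {M : Matroid ℕ} {E : Set ℕ} (h : IsUnif M E 0) {f : ℕ} (hf : f ∈ E) :
    IsLoopE M f := by
  refine ⟨h.1 ▸ hf, fun hi => ?_⟩
  have := ((h.indep_iff (by simp)).1 hi).2
  simp at this

lemma IsUnif.coloop {M : Matroid ℕ} {E : Set ℕ} {r : ℕ} (h : IsUnif M E r)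
    (hE : E.encard = (r : ℕ∞)) {f : ℕ} (hf : f ∈ E) : IsColoopE M f := by
  have hEfin : E.Finite := Set.finite_of_encard_eq_coe hE
  refine ⟨h.1 ▸ hf, fun B hB => ?_⟩
  obtain ⟨hBE, hBr⟩ := (h.2 B).1 hB
  have hBEq : B = E := Set.Finite.eq_of_subset_of_encard_le' hEfin hBE (by rw [hBr, hE])
  rw [hBEq]; exact hf

lemma IsUnif.eq_freeOn {M : Matroid ℕ} {E : Set ℕ} {r : ℕ} (h : IsUnif M E r)
    (hE : E.encard = (r : ℕ∞)) : M = Matroid.freeOn E := by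
  rw [Matroid.eq_freeOn_iff]
  exact ⟨h.1, ((h.2 E).2 ⟨subset_rfl, hE⟩).indep⟩

lemma beta_key (β : Matroid ℕ → ℤ)
    (hβ0 : ∀ e : ℕ, β (Matroid.loopyOn {e}) = 0)
    (hβ1 : ∀ e : ℕ, β (Matroid.freeOn {e}) = 1)
    (hβlc : ∀ M : Matroid ℕ, 2 ≤ M.E.encard → (∃ e, IsLoopE M e ∨ IsColoopE M e) → β M = 0)
    (hβdc : ∀ (M : Matroid ℕ) (i : ℕ), i ∈ M.E → ¬ IsLoopE M i → ¬ IsColoopE M i →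
      β M = β (mContract M {i}) + β (mDelete M {i})) :
    ∀ n r : ℕ, 0 < r → r < n → ∀ M : Matroid ℕ, M.E.encard = (n : ℕ∞) →
      IsUnif M M.E r → β M = ((n - 2).choose (r - 1) : ℤ) := by
  intro n
  induction n using Nat.strong_induction_on with
  | _ n IH =>
  intro r hr hrn M hE hU
  have hn2 : 2 ≤ n := by omega
  have hEfin : M.E.Finite := Set.finite_of_encard_eq_coe hE
  obtain ⟨e, he⟩ : M.E.Nonempty := by
    rw [← Set.encard_pos, hE]; exact_mod_cast (show 0 < n by omega)
  have hE' : (M.E \ {e}).encard = ((n - 1 : ℕ) : ℕ∞) := by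
    rw [Set.encard_diff_singleton_of_mem he, hE]
    norm_cast
  have hrE : (r : ℕ∞) ≤ M.E.encard := by rw [hE]; exact_mod_cast hrn.le
  have hrE' : (r : ℕ∞) ≤ (M.E \ {e}).encard := by
    rw [hE']; exact_mod_cast Nat.le_sub_one_of_lt hrn
  -- e is not a loop
  have hnl : ¬ IsLoopE M e := by
    rintro ⟨-, hni⟩
    exact hni ((hU.indep_iff hrE).2 ⟨Set.singleton_subset_iff.2 he,
      by rw [Set.encard_singleton]; exact_mod_cast hr⟩)
  -- e is not a coloop
  have hnc : ¬ IsColoopE M e := by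
    rintro ⟨-, hall⟩
    obtain ⟨B, hBsub, hBr⟩ := Set.exists_subset_encard_eq hrE'
    have hB : M.IsBase B := (hU.2 B).2 ⟨hBsub.trans Set.diff_subset, hBr⟩
    exact (hBsub (hall B hB)).2 rfl
  rw [hβdc M e he hnl hnc]
  -- the deletion is uniform of rank r on M.E \ {e}
  have hD : IsUnif (mDelete M {e}) (M.E \ {e}) r := hU.restrict Set.diff_subset hrE'
  -- the contraction is uniform of rank r - 1 on M.E \ {e}
  have hC : IsUnif (mContract M {e}) (M.E \ {e}) (r - 1) := by
    have hdual : IsUnif M✶ M.E (n - r) := hU.dual hE hrn.le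
    have hmid : IsUnif (mDelete M✶ {e}) (M.E \ {e}) (n - r) := by
      have : M✶.E = M.E := rfl
      unfold mDelete
      rw [this]
      exact hdual.restrict Set.diff_subset (by rw [hE']; exact_mod_cast (by omega : n - r ≤ n - 1))
    have := (hmid.1 ▸ hmid : IsUnif (mDelete M✶ {e}) (mDelete M✶ {e}).E (n - r))
    have h2 := this.dual (n := n - 1) (by rw [hmid.1, hE']) (by omega)
    rw [hmid.1, (by omega : n - 1 - (n - r) = r - 1)] at h2
    exact h2
  have hCE : (mContract M {e}).E = M.E \ {e} := hC.1
  have hDE : (mDelete M {e}).E = M.E \ {e} := hD.1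
  -- value of the contraction term
  have hCval : β (mContract M {e}) = if r = 1 then 0 else ((n - 3).choose (r - 2) : ℤ) := by
    rcases eq_or_ne r 1 with rfl | hr1
    · simp only [if_pos rfl]
      rcases eq_or_ne n 2 with rfl | hn2'
      · obtain ⟨f, hf⟩ : ∃ f, M.E \ {e} = {f} := by
          rw [← Set.encard_eq_one, hE']; norm_num
        rw [hf] at hC
        rw [hC.eq_loopyOn]
        exact hβ0 f
      · have h2 : 2 ≤ (mContract M {e}).E.encard := by
          rw [hCE, hE']; exact_mod_cast (by omega : 2 ≤ n - 1)
        obtain ⟨f, hf⟩ : (M.E \ {e}).Nonempty := by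
          rw [← Set.encard_pos, hE']; exact_mod_cast (by omega : 0 < n - 1)
        exact hβlc _ h2 ⟨f, Or.inl (hC.loop hf)⟩
    · rw [if_neg hr1]
      exact IH (n - 1) (by omega) (r - 1) (by omega) (by omega) _ (by rw [hCE, hE'])
        (hCE ▸ hC) |>.trans (by rw [(by omega : n - 1 - 2 = n - 3), (by omega : r - 1 - 1 = r - 2)])
  -- value of the deletion term
  have hDval : β (mDelete M {e}) = if r = n - 1 then (if n = 2 then 1 else 0)
      else ((n - 3).choose (r - 1) : ℤ) := by
    rcases eq_or_ne r (n - 1) with hrn1 | hrn1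
    · rw [if_pos hrn1]
      have hfull : (M.E \ {e}).encard = (r : ℕ∞) := by rw [hE', hrn1]
      rcases eq_or_ne n 2 with rfl | hn2'
      · rw [if_pos rfl]
        obtain ⟨f, hf⟩ : ∃ f, M.E \ {e} = {f} := by
          rw [← Set.encard_eq_one, hE']; norm_num
        rw [hf] at hD hfull
        rw [hD.eq_freeOn hfull]
        exact hβ1 f
      · rw [if_neg hn2']
        have h2 : 2 ≤ (mDelete M {e}).E.encard := by
          rw [hDE, hE']; exact_mod_cast (by omega : 2 ≤ n - 1)
        obtain ⟨f, hf⟩ : (M.E \ {e}).Nonempty := by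
          rw [← Set.encard_pos, hE']; exact_mod_cast (by omega : 0 < n - 1)
        exact hβlc _ h2 ⟨f, Or.inr (hD.coloop hfull hf)⟩
    · rw [if_neg hrn1]
      exact IH (n - 1) (by omega) r hr (by omega) _ (by rw [hDE, hE'])
        (hDE ▸ hD) |>.trans (by rw [(by omega : n - 1 - 2 = n - 3)])
  rw [hCval, hDval]
  -- arithmetic
  rcases eq_or_ne r 1 with rfl | hr1
  · rcases eq_or_ne n 2 with rfl | hn2'
    · norm_num
    · rw [if_pos rfl, if_neg (by omega)]
      norm_num
  · rw [if_neg hr1]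
    rcases eq_or_ne r (n - 1) with hrn1 | hrn1
    · rw [if_pos hrn1, if_neg (by omega)]
      rw [(by omega : n - 3 = r - 2), (by omega : n - 2 = r - 1)]
      simp [Nat.choose_self]
    · rw [if_neg hrn1]
      have : (n - 2).choose (r - 1) = (n - 3).choose (r - 2) + (n - 3).choose (r - 1) := by
        rw [(by omega : n - 2 = (n - 3) + 1), (by omega : r - 1 = (r - 2) + 1)]
        exact Nat.choose_succ_succ _ _
      rw [this]
      push_cast
      ring

/-- The beta invariant of the uniform matroid `U_{r,n}` (rank `r` on `{1,…,n}`, `0 < r < n`)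
equals `C(n-2, r-1)`.  Here `β` is any function satisfying the defining properties of the
beta invariant: `β(U_{0,1}) = 0`, `β(U_{1,1}) = 1`, `β(M) = 0` whenever `M` has at least two
elements and a loop or a coloop, and deletion–contraction. -/
theorem beta_uniform (β : Matroid ℕ → ℤ)
    (hβ0 : ∀ e : ℕ, β (Matroid.loopyOn {e}) = 0)
    (hβ1 : ∀ e : ℕ, β (Matroid.freeOn {e}) = 1)
    (hβlc : ∀ M : Matroid ℕ, 2 ≤ M.E.encard → (∃ e, IsLoopE M e ∨ IsColoopE M e) → β M = 0)
    (hβdc : ∀ (M : Matroid ℕ) (i : ℕ), i ∈ M.E → ¬ IsLoopE M i → ¬ IsColoopE M i →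
      β M = β (mContract M {i}) + β (mDelete M {i}))
    (r n : ℕ) (hr : 0 < r) (hrn : r < n)
    (M : Matroid ℕ) (hE : M.E = Set.Icc 1 n)
    (hbase : ∀ B : Set ℕ, M.IsBase B ↔ B ⊆ Set.Icc 1 n ∧ B.encard = r) :
    β M = (n - 2).choose (r - 1) := by
  have hIcc : (Set.Icc 1 n).encard = (n : ℕ∞) := by
    rw [← Finset.coe_Icc, Set.encard_coe_eq_coe_finsetCard, Nat.card_Icc]
    norm_num
  exact beta_key β hβ0 hβ1 hβlc hβdc n r hr hrn M (by rw [hE, hIcc]) ⟨rfl, fun B => by rw [hbase B, hE]⟩
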